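/- Sufficiency of (|y|, H y^b, A y^b) as a description of y: Let G, H, A be as in Lemma 1 (G an N × K matrix over ZMod 2 with injective associated map, H an r × N matrix over ZMod 2 with rank(H) = N − K and H·G = 0, A a K × N matrix with A·G = I_K). If y, y' : Fin N → ℝ have all components nonzero and satisfy |y| = |y'|, H · bin(sign(y)) = H · bin(sign(y')), and A · bin(sign(y)) = A · bin(sign(y')), then y = y'. (The channel output is determined by its reliabilities together with the syndrome and message-space projection of its hard decisions.) -/

import Mathlib

/-- Sign of a real number: `1` if positive, `−1` otherwise (only used on
nonzero reals). -/
noncomputable def sgn (t : ℝ) : ℝ := if 0 < t then 1 else -1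

/-- The inverse of the bipolar map: `bin 1 = 0`, `bin (-1) = 1`. -/
noncomputable def bin (t : ℝ) : ZMod 2 := if t = 1 then 0 else 1

lemma key_inj (N K r : ℕ)
    (G : Matrix (Fin N) (Fin K) (ZMod 2)) (hG : Function.Injective G.mulVec)
    (H : Matrix (Fin r) (Fin N) (ZMod 2)) (hHrank : H.rank = N - K)
    (hHG : H * G = 0)
    (A : Matrix (Fin K) (Fin N) (ZMod 2)) (hAG : A * G = 1)
    (d : Fin N → ZMod 2) (hd : H.mulVec d = 0) (hAd : A.mulVec d = 0) :
    d = 0 := by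
  have hGlin : Function.Injective G.mulVecLin := by
    intro a b h; exact hG (by simpa [Matrix.mulVecLin_apply] using h)
  have hKN : K ≤ N := by
    have := LinearMap.finrank_le_finrank_of_injective hGlin
    simpa using this
  have hrange_le : LinearMap.range G.mulVecLin ≤ LinearMap.ker H.mulVecLin := by
    rintro x ⟨m, rfl⟩
    simp only [LinearMap.mem_ker, Matrix.mulVecLin_apply]
    rw [Matrix.mulVec_mulVec, hHG]
    simp
  have hrank : H.rank + Module.finrank (ZMod 2) (LinearMap.ker H.mulVecLin) = N := by
    have := LinearMap.finrank_range_add_finrank_ker H.mulVecLin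
    simpa [Matrix.rank] using this
  have hker_dim : Module.finrank (ZMod 2) (LinearMap.ker H.mulVecLin) = K := by
    omega
  have hrange_dim : Module.finrank (ZMod 2) (LinearMap.range G.mulVecLin) = K := by
    rw [LinearMap.finrank_range_of_inj hGlin]
    simp
  have heq : LinearMap.range G.mulVecLin = LinearMap.ker H.mulVecLin := by
    apply Submodule.eq_of_le_of_finrank_le hrange_le
    rw [hker_dim, hrange_dim]
  have hdmem : d ∈ LinearMap.range G.mulVecLin := by
    rw [heq]; simpa [Matrix.mulVecLin_apply] using hd
  obtain ⟨m, hm⟩ := hdmem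
  have : m = 0 := by
    have h1 : A.mulVec (G.mulVec m) = m := by
      rw [Matrix.mulVec_mulVec, hAG]; simp
    rw [show G.mulVec m = d from hm, hAd] at h1
    exact h1.symm
  rw [← hm, this]
  simp

theorem channel_output_determined_by_reliabilities_syndrome_projection
    (N K r : ℕ)
    (G : Matrix (Fin N) (Fin K) (ZMod 2)) (hG : Function.Injective G.mulVec)
    (H : Matrix (Fin r) (Fin N) (ZMod 2)) (hHrank : H.rank = N - K)
    (hHG : H * G = 0)
    (A : Matrix (Fin K) (Fin N) (ZMod 2)) (hAG : A * G = 1)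
    (y y' : Fin N → ℝ) (hy : ∀ i, y i ≠ 0) (hy' : ∀ i, y' i ≠ 0)
    (habs : ∀ i, |y i| = |y' i|)
    (hsyn : H.mulVec (fun i => bin (sgn (y i))) =
      H.mulVec (fun i => bin (sgn (y' i))))
    (hproj : A.mulVec (fun i => bin (sgn (y i))) =
      A.mulVec (fun i => bin (sgn (y' i)))) :
    y = y' := by
  set b : Fin N → ZMod 2 := fun i => bin (sgn (y i)) with hb
  set b' : Fin N → ZMod 2 := fun i => bin (sgn (y' i)) with hb'
  have hd : b - b' = 0 := by
    apply key_inj N K r G hG H hHrank hHG A hAG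
    · rw [Matrix.mulVec_sub, hsyn, sub_self]
    · rw [Matrix.mulVec_sub, hproj, sub_self]
  have hbb : b = b' := by
    have := sub_eq_zero.mp hd
    exact this
  funext i
  have hbi : bin (sgn (y i)) = bin (sgn (y' i)) := congrFun hbb i
  have hsgn : sgn (y i) = sgn (y' i) := by
    unfold sgn at *
    unfold bin at hbi
    by_cases h1 : 0 < y i <;> by_cases h2 : 0 < y' i <;> simp [h1, h2] at hbi ⊢
    · exact absurd hbi (by norm_num)
    · exact absurd hbi.symm (by norm_num)
  have hyi : y i = sgn (y i) * |y i| := by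
    unfold sgn
    rcases lt_trichotomy (y i) 0 with h | h | h
    · simp [not_lt.mpr h.le, h.not_gt, abs_of_neg h]
    · exact absurd h (hy i)
    · simp [h, abs_of_pos h]
  have hyi' : y' i = sgn (y' i) * |y' i| := by
    unfold sgn
    rcases lt_trichotomy (y' i) 0 with h | h | h
    · simp [not_lt.mpr h.le, h.not_gt, abs_of_neg h]
    · exact absurd h (hy' i)
    · simp [h, abs_of_pos h]
  rw [hyi, hyi', hsgn, habs i]
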